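/- arXiv:2510.08644 — 3 statements merged into one kernel-verified Lean document; each statement's English description precedes it below -/
import Mathlib

section
/- Let A ∈ ℂ^{N×N} with N = 2^n be s-sparse with s = 2^m and |A_{i,j}| ≤ 1 for all i,j, and let c(j,ℓ) give the row index of the ℓ-th nonzero entry of column j (extended so that ℓ ↦ c(j,ℓ) is a bijection on {0,…,s−1} positions and A_{c(j,ℓ),j} = 0 for padding entries). Suppose O_c is a unitary with O_c|ℓ⟩|j⟩ = |ℓ⟩|c(j,ℓ)⟩ and O_A is a unitary with O_A|0⟩|ℓ⟩|j⟩ = (A_{c(j,ℓ),j}|0⟩ + √(1−|A_{c(j,ℓ),j}|²)|1⟩)|ℓ⟩|j⟩. Then U_A = (I₂ ⊗ D_s ⊗ I_N)(I₂ ⊗ O_c) O_A (I₂ ⊗ D_s ⊗ I_N), where D_s = H^{⊗m} is the m-fold tensor power of the Hadamard gate, is an (s, m+1)-block-encoding of A, i.e., (⟨0^{m+1}| ⊗ I_N) U_A (|0^{m+1}⟩ ⊗ I_N) = A/s. -/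
open Kronecker

noncomputable section

/-- `m`-fold tensor power of the Hadamard gate, acting on `Fin (2^m)` via binary
indexing: entries `(1/√(2^m)) · (−1)^{⟨k,l⟩}` with `⟨k,l⟩` the bitwise inner product. -/
def hadamardPow (m : ℕ) : Matrix (Fin (2 ^ m)) (Fin (2 ^ m)) ℂ :=
  Matrix.of fun k l =>
    ((1 / Real.sqrt (2 ^ m) : ℝ) : ℂ) *
      (-1 : ℂ) ^ ((Finset.range m).filter
        (fun t => (k : ℕ).testBit t ∧ (l : ℕ).testBit t)).card

/-- Block encoding of a sparse matrix: with `O_c |ℓ⟩|j⟩ = |ℓ⟩|c(j,ℓ)⟩` and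
`O_A |0⟩|ℓ⟩|j⟩ = (A_{c(j,ℓ),j}|0⟩ + √(1−|A_{c(j,ℓ),j}|²)|1⟩)|ℓ⟩|j⟩`,
the unitary `U_A = (I₂ ⊗ D_s ⊗ I_N)(I₂ ⊗ O_c) O_A (I₂ ⊗ D_s ⊗ I_N)` is an
`(s, m+1)`-block-encoding of `A`, i.e. its top-left block equals `A/s`. -/
theorem sparse_block_encoding (n m : ℕ)
    (A : Matrix (Fin (2 ^ n)) (Fin (2 ^ n)) ℂ)
    (hbound : ∀ i j, ‖A i j‖ ≤ 1)
    (c : Fin (2 ^ n) → Fin (2 ^ m) → Fin (2 ^ n))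
    (hinj : ∀ j, Function.Injective (c j))
    (hcover : ∀ i j, A i j ≠ 0 → ∃ ℓ, c j ℓ = i)
    (Oc : Matrix (Fin (2 ^ m) × Fin (2 ^ n)) (Fin (2 ^ m) × Fin (2 ^ n)) ℂ)
    (hOcU : Oc ∈ Matrix.unitaryGroup (Fin (2 ^ m) × Fin (2 ^ n)) ℂ)
    (hOc : ∀ w v, Oc w v = if w.1 = v.1 ∧ w.2 = c v.2 v.1 then 1 else 0)
    (OA : Matrix (Fin 2 × (Fin (2 ^ m) × Fin (2 ^ n)))
      (Fin 2 × (Fin (2 ^ m) × Fin (2 ^ n))) ℂ)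
    (hOAU : OA ∈ Matrix.unitaryGroup (Fin 2 × (Fin (2 ^ m) × Fin (2 ^ n))) ℂ)
    (hOA : ∀ ℓ j, OA.mulVec (fun w => if w = (0, (ℓ, j)) then 1 else 0) =
      fun w =>
        (if w = (0, (ℓ, j)) then A (c j ℓ) j else 0) +
        (if w = (1, (ℓ, j)) then
          ((Real.sqrt (1 - ‖A (c j ℓ) j‖ ^ 2) : ℝ) : ℂ) else 0)) :
    let UA := ((1 : Matrix (Fin 2) (Fin 2) ℂ) ⊗ₖ
        (hadamardPow m ⊗ₖ (1 : Matrix (Fin (2 ^ n)) (Fin (2 ^ n)) ℂ))) *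
      ((1 : Matrix (Fin 2) (Fin 2) ℂ) ⊗ₖ Oc) * OA *
      ((1 : Matrix (Fin 2) (Fin 2) ℂ) ⊗ₖ
        (hadamardPow m ⊗ₖ (1 : Matrix (Fin (2 ^ n)) (Fin (2 ^ n)) ℂ)))
    ∀ i j : Fin (2 ^ n),
      UA (0, (⟨0, pow_pos (by norm_num) m⟩, i)) (0, (⟨0, pow_pos (by norm_num) m⟩, j)) =
        A i j / (2 ^ m : ℂ) := by
  intro UA i j
  unfold UA
  set z : Fin (2 ^ m) := ⟨0, pow_pos (by norm_num) m⟩ with hzdef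
  set sC : ℂ := ((1 / Real.sqrt (2 ^ m) : ℝ) : ℂ) with hsdef
  have hD0 : ∀ k, hadamardPow m k z = sC := by
    intro k; simp [hadamardPow, hzdef, Nat.zero_testBit, hsdef]
  have hD0' : ∀ k, hadamardPow m z k = sC := by
    intro k; simp [hadamardPow, hzdef, Nat.zero_testBit, hsdef]
  have hcol : ∀ (ℓ : Fin (2 ^ m)) (w : Fin 2 × (Fin (2 ^ m) × Fin (2 ^ n))),
      OA w (0, (ℓ, j)) =
        (if w = (0, (ℓ, j)) then A (c j ℓ) j else 0) +
        (if w = (1, (ℓ, j)) then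
          ((Real.sqrt (1 - ‖A (c j ℓ) j‖ ^ 2) : ℝ) : ℂ) else 0) := by
    intro ℓ w
    have h := congrFun (hOA ℓ j) w
    simpa [Matrix.mulVec, dotProduct, mul_ite] using h
  have hL : ∀ (a : Fin 2) (ℓ : Fin (2 ^ m)) (y : Fin (2 ^ n)),
      (((1 : Matrix (Fin 2) (Fin 2) ℂ) ⊗ₖ
          (hadamardPow m ⊗ₖ (1 : Matrix (Fin (2 ^ n)) (Fin (2 ^ n)) ℂ))) *
        ((1 : Matrix (Fin 2) (Fin 2) ℂ) ⊗ₖ Oc)) (0, (z, i)) (a, (ℓ, y)) =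
        if a = 0 ∧ c y ℓ = i then sC else 0 := by
    intro a ℓ y
    rw [Matrix.mul_apply, Fintype.sum_prod_type]
    simp only [Fintype.sum_prod_type, Matrix.kroneckerMap_apply, Matrix.one_apply, hOc,
      hD0', mul_ite, ite_mul, one_mul, mul_one, zero_mul, mul_zero,
      Finset.sum_ite_eq, Finset.sum_ite_eq', Finset.mem_univ, if_true,
      Finset.sum_ite_irrel, Finset.sum_const_zero]
    by_cases ha : a = 0 <;> by_cases hc : c y ℓ = i <;>
      simp [ha, hc, eq_comm, ite_and, Finset.sum_ite_eq, Finset.sum_ite_eq']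
    exact fun h => absurd h.symm hc
  have hT : ∀ ℓ : Fin (2 ^ m),
      (((1 : Matrix (Fin 2) (Fin 2) ℂ) ⊗ₖ
          (hadamardPow m ⊗ₖ (1 : Matrix (Fin (2 ^ n)) (Fin (2 ^ n)) ℂ))) *
        ((1 : Matrix (Fin 2) (Fin 2) ℂ) ⊗ₖ Oc) * OA) (0, (z, i)) (0, (ℓ, j)) =
        (if c j ℓ = i then sC else 0) * A (c j ℓ) j := by
    intro ℓ
    rw [Matrix.mul_apply]
    simp only [hcol, mul_add]
    rw [Finset.sum_add_distrib]
    simp only [mul_ite, mul_zero, Finset.sum_ite_eq', Finset.mem_univ, if_true]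
    rw [hL 0 ℓ j, hL 1 ℓ j]
    simp [ite_mul]
  rw [Matrix.mul_apply, Fintype.sum_prod_type]
  simp only [Fintype.sum_prod_type, Matrix.kroneckerMap_apply, Matrix.one_apply, hD0,
    mul_ite, ite_mul, one_mul, mul_one, zero_mul, mul_zero,
    Finset.sum_ite_eq, Finset.sum_ite_eq', Finset.mem_univ, if_true,
    Finset.sum_ite_irrel, Finset.sum_const_zero]
  simp only [hT]
  have hss : sC * sC = ((2 : ℂ) ^ m)⁻¹ := by
    rw [hsdef, ← Complex.ofReal_mul, div_mul_div_comm, one_mul,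
      Real.mul_self_sqrt (by positivity)]
    push_cast
    rw [one_div]
  by_cases hex : ∃ ℓ, c j ℓ = i
  · obtain ⟨ℓ₀, hℓ₀⟩ := hex
    rw [Finset.sum_eq_single ℓ₀]
    · rw [hℓ₀]
      have h2 : sC * A i j * sC = A i j / 2 ^ m := by
        rw [div_eq_mul_inv, ← hss]; ring
      simpa using h2
    · intro b _ hb
      have : c j b ≠ i := fun h => hb (hinj j (h.trans hℓ₀.symm))
      simp [this]
    · intro h; exact absurd (Finset.mem_univ ℓ₀) h
  · have hA : A i j = 0 := by
      by_contra h
      exact hex (hcover i j h)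
    rw [hA, zero_div]
    refine Finset.sum_eq_zero fun ℓ _ => ?_
    have : c j ℓ ≠ i := fun h => hex ⟨ℓ, h⟩
    simp [this]
end
end

section
/- Let p, q, r, s be distinct indices with p < q and r > s, and let |j⟩ be an occupation basis state with j_p = 0, j_q = 0, j_r = 1, j_s = 1. Then a_p† a_q† a_r a_s |j⟩ = (−1)^{d_{j',p,q} + d_{j,r,s}} |FLIP(FLIP(j;r,s);p,q)⟩, where j' = FLIP(j;r,s), d_{j,r,s} = j_{s+1} + ⋯ + j_{r−1}, and d_{j',p,q} = j'_{p+1} + ⋯ + j'_{q−1}. -/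
noncomputable section

/-- Flip bits `p` and `q` of the bit string `j` (if `p = q` this is the identity). -/
def flipBits {n : ℕ} (j : Fin n → Bool) (p q : Fin n) : Fin n → Bool :=
  fun i => Bool.xor (Bool.xor (j i) (decide (i = p))) (decide (i = q))

/-- The occupation-number basis state `a_{f_0}† a_{f_1}† ⋯ a_{f_{η−1}}† |vac⟩`,
where `f_0 < f_1 < ⋯` are the positions occupied in `j`. -/
def occState {n : ℕ} {V : Type*} [AddCommGroup V] [Module ℂ V]
    (cr : Fin n → V →ₗ[ℂ] V) (vac : V) (j : Fin n → Bool) : V :=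
  (((List.finRange n).filter (fun p => j p)).foldr (fun p v => cr p v) vac)

namespace TBP

variable {n : ℕ} {V : Type*} [AddCommGroup V] [Module ℂ V]

/-- fold of creation operators over a list -/
def F (cr : Fin n → V →ₗ[ℂ] V) (vac : V) (L : List (Fin n)) : V :=
  L.foldr (fun p v => cr p v) vac

@[simp] lemma F_nil (cr : Fin n → V →ₗ[ℂ] V) (vac : V) : F cr vac [] = vac := rfl

@[simp] lemma F_cons (cr : Fin n → V →ₗ[ℂ] V) (vac : V) (a : Fin n) (T : List (Fin n)) :
    F cr vac (a :: T) = cr a (F cr vac T) := rfl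

section ops

variable (cr an : Fin n → V →ₗ[ℂ] V) (vac : V)
variable (hmix : ∀ p q : Fin n, an p ∘ₗ cr q + cr q ∘ₗ an p
      = if p = q then (LinearMap.id : V →ₗ[ℂ] V) else 0)
variable (hcr : ∀ p q : Fin n, cr p ∘ₗ cr q + cr q ∘ₗ cr p = 0)
variable (hvac : ∀ p : Fin n, an p vac = 0)

include hmix in
lemma an_cr (r a : Fin n) (w : V) :
    an r (cr a w) = (if r = a then w else 0) - cr a (an r w) := by
  have h := LinearMap.congr_fun (hmix r a) w
  simp only [LinearMap.add_apply, LinearMap.comp_apply] at h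
  rw [eq_sub_iff_add_eq]
  split_ifs at h ⊢ with hra
  · simpa using h
  · simpa using h

include hcr in
lemma cr_cr (p a : Fin n) (w : V) : cr p (cr a w) = - cr a (cr p w) := by
  have h := LinearMap.congr_fun (hcr p a) w
  simp only [LinearMap.add_apply, LinearMap.comp_apply, LinearMap.zero_apply] at h
  rw [eq_neg_iff_add_eq_zero]
  exact h

include hmix hvac in
lemma an_not_mem (r : Fin n) : ∀ L : List (Fin n), r ∉ L → an r (F cr vac L) = 0 := by
  intro L
  induction L with
  | nil => intro _; exact hvac r
  | cons a T ih =>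
    intro h
    have hra : r ≠ a := fun hh => h (hh ▸ List.mem_cons_self (a := a) (l := T))
    have hrT : r ∉ T := fun hh => h (List.mem_cons_of_mem a hh)
    rw [F_cons, an_cr cr an hmix r a, if_neg hra, ih hrT]
    simp

include hmix hvac in
lemma an_mem (r : Fin n) : ∀ L : List (Fin n), L.Pairwise (· < ·) → r ∈ L →
    an r (F cr vac L) =
      ((-1 : ℂ) ^ ((L.filter (fun a => a < r)).length)) • F cr vac (L.erase r) := by
  intro L
  induction L with
  | nil => intro _ h; exact absurd h List.not_mem_nil
  | cons a T ih =>
    intro hs hm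
    rcases List.pairwise_cons.mp hs with ⟨ha, hT⟩
    by_cases hra : r = a
    · subst hra
      have hrT : r ∉ T := fun hh => lt_irrefl r (ha r hh)
      rw [F_cons, an_cr cr an hmix, if_pos rfl,
        an_not_mem cr an vac hmix hvac r T hrT, List.erase_cons_head]
      have hfil : (List.filter (fun a => decide (a < r)) (r :: T)) = [] := by
        rw [List.filter_eq_nil_iff]
        intro b hb
        rcases List.mem_cons.mp hb with h1 | h1
        · subst h1; simp
        · simp only [decide_eq_true_eq]
          exact not_lt.mpr (le_of_lt (ha b h1))
      rw [hfil]
      simp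
    · have hrT : r ∈ T := by
        rcases List.mem_cons.mp hm with h1 | h1
        · exact absurd h1 hra
        · exact h1
      have har : a < r := ha r hrT
      rw [F_cons, an_cr cr an hmix, if_neg hra, ih hT hrT, map_smul,
        List.erase_cons_tail (by simp [Ne.symm hra])]
      have hfil : (List.filter (fun b => decide (b < r)) (a :: T)) =
          a :: List.filter (fun b => decide (b < r)) T := by
        rw [List.filter_cons_of_pos (by simpa using har)]
      rw [hfil]
      simp only [List.length_cons, F_cons, pow_succ]
      rw [zero_sub]
      module

include hcr in
lemma cr_insert (p : Fin n) : ∀ L : List (Fin n), L.Pairwise (· < ·) → p ∈ L →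
    cr p (F cr vac (L.erase p)) =
      ((-1 : ℂ) ^ ((L.filter (fun a => a < p)).length)) • F cr vac L := by
  intro L
  induction L with
  | nil => intro _ h; exact absurd h List.not_mem_nil
  | cons a T ih =>
    intro hs hm
    rcases List.pairwise_cons.mp hs with ⟨ha, hT⟩
    by_cases hpa : p = a
    · subst hpa
      rw [List.erase_cons_head]
      have hfil : (List.filter (fun b => decide (b < p)) (p :: T)) = [] := by
        rw [List.filter_eq_nil_iff]
        intro b hb
        rcases List.mem_cons.mp hb with h1 | h1
        · subst h1; simp
        · simp only [decide_eq_true_eq]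
          exact not_lt.mpr (le_of_lt (ha b h1))
      rw [hfil]
      simp
    · have hpT : p ∈ T := by
        rcases List.mem_cons.mp hm with h1 | h1
        · exact absurd h1 hpa
        · exact h1
      have hap : a < p := ha p hpT
      rw [List.erase_cons_tail (by simp [Ne.symm hpa]), F_cons,
        cr_cr cr hcr, ih hT hpT, map_smul]
      have hfil : (List.filter (fun b => decide (b < p)) (a :: T)) =
          a :: List.filter (fun b => decide (b < p)) T := by
        rw [List.filter_cons_of_pos (by simpa using hap)]
      rw [hfil]
      simp only [List.length_cons, F_cons, pow_succ]
      module

end ops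

/-- turn off bit `x` -/
def off (f : Fin n → Bool) (x : Fin n) : Fin n → Bool := fun i => f i && !(decide (i = x))

@[simp] lemma off_apply (f : Fin n → Bool) (x i : Fin n) :
    off f x i = (f i && !(decide (i = x))) := rfl

/-- the list of occupied sites -/
def Lf (f : Fin n → Bool) : List (Fin n) := (List.finRange n).filter (fun i => f i)

lemma Lf_sorted (f : Fin n → Bool) : (Lf f).Pairwise (· < ·) :=
  (List.pairwise_lt_finRange n).filter _

lemma Lf_nodup (f : Fin n → Bool) : (Lf f).Nodup := (Lf_sorted f).nodup

lemma mem_Lf {f : Fin n → Bool} {i : Fin n} : i ∈ Lf f ↔ f i = true := by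
  simp [Lf, List.mem_filter]

lemma Lf_erase (f : Fin n → Bool) (x : Fin n) :
    (Lf f).erase x = Lf (off f x) := by
  haveI : IsAntisymm (Fin n) (· < ·) := ⟨fun a b h1 h2 => absurd h1 (asymm h2)⟩
  refine (fun h1 h2 h3 => List.Perm.eq_of_pairwise (le := ((· < ·) : Fin n → Fin n → Prop))
    (fun a b _ _ x y => absurd x (asymm y)) h2 h3 h1) ?_ ?_ ?_
  · rw [List.perm_ext_iff_of_nodup ((Lf_nodup f).erase x) (Lf_nodup _)]
    intro i
    rw [(Lf_nodup f).mem_erase_iff, mem_Lf, mem_Lf]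
    by_cases h : i = x <;> simp [off, h]
  · exact ((Lf_sorted f).sublist (List.erase_sublist (a := x) (l := Lf f)))
  · exact Lf_sorted _

lemma occState_eq (cr : Fin n → V →ₗ[ℂ] V) (vac : V) (f : Fin n → Bool) :
    occState cr vac f = F cr vac (Lf f) := rfl

/-- counting -/
lemma length_filter_eq_card (P : Fin n → Bool) :
    ((List.finRange n).filter P).length = (Finset.univ.filter (fun i => P i = true)).card := by
  have nd : ((List.finRange n).filter P).Nodup := (List.nodup_finRange n).filter _
  rw [← List.toFinset_card_of_nodup nd]
  congr 1
  ext i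
  simp

lemma Lf_filter_length (f : Fin n → Bool) (x : Fin n) :
    ((Lf f).filter (fun a => a < x)).length
      = (Finset.univ.filter (fun i => f i = true ∧ i < x)).card := by
  rw [Lf, List.filter_filter, length_filter_eq_card]
  congr 1
  ext i
  simp [and_comm]

lemma card_filter_congr {P Q : Fin n → Prop} [DecidablePred P] [DecidablePred Q]
    (h : ∀ i, P i ↔ Q i) :
    (Finset.univ.filter P).card = (Finset.univ.filter Q).card := by
  congr 1
  ext i
  simp [h i]

lemma card_lt_split (f : Fin n → Bool) (x y : Fin n) (hxy : x < y) (hfx : f x = false) :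
    (Finset.univ.filter (fun i => f i = true ∧ i < y)).card
      = (Finset.univ.filter (fun i => f i = true ∧ i < x)).card
        + (Finset.univ.filter (fun i => f i = true ∧ x < i ∧ i < y)).card := by
  rw [← Finset.card_union_of_disjoint ?disj]
  · congr 1
    ext i
    simp only [Finset.mem_union, Finset.mem_filter, Finset.mem_univ, true_and]
    constructor
    · rintro ⟨hfi, hiy⟩
      rcases lt_trichotomy i x with h | h | h
      · exact Or.inl ⟨hfi, h⟩
      · exact absurd (h ▸ hfi) (by simp [hfx])
      · exact Or.inr ⟨hfi, h, hiy⟩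
    · rintro (⟨hfi, hix⟩ | ⟨hfi, _, hiy⟩)
      · exact ⟨hfi, lt_trans hix hxy⟩
      · exact ⟨hfi, hiy⟩
  case disj =>
    rw [Finset.disjoint_left]
    rintro i hi1 hi2
    simp only [Finset.mem_filter] at hi1 hi2
    exact absurd hi1.2.2 (not_lt.mpr (le_of_lt hi2.2.2.1))

end TBP

open TBP in
/-- For distinct `p, q, r, s` with `p < q`, `s < r`, and `j_p = j_q = 0`, `j_r = j_s = 1`:
`a_p† a_q† a_r a_s |j⟩ = (−1)^{d_{j',p,q} + d_{j,r,s}} |FLIP(FLIP(j;r,s);p,q)⟩`,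
where `j' = FLIP(j;r,s)`, `d_{j,r,s} = j_{s+1} + ⋯ + j_{r−1}`,
`d_{j',p,q} = j'_{p+1} + ⋯ + j'_{q−1}`. -/
theorem two_body_phase {n : ℕ} {V : Type*} [AddCommGroup V] [Module ℂ V]
    (cr an : Fin n → V →ₗ[ℂ] V) (vac : V)
    (hmix : ∀ p q : Fin n, an p ∘ₗ cr q + cr q ∘ₗ an p
      = if p = q then (LinearMap.id : V →ₗ[ℂ] V) else 0)
    (han : ∀ p q : Fin n, an p ∘ₗ an q + an q ∘ₗ an p = 0)
    (hcr : ∀ p q : Fin n, cr p ∘ₗ cr q + cr q ∘ₗ cr p = 0)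
    (hvac : ∀ p : Fin n, an p vac = 0)
    (j : Fin n → Bool) (p q r s : Fin n) (hpq : p < q) (hsr : s < r)
    (hpr : p ≠ r) (hps : p ≠ s) (hqr : q ≠ r) (hqs : q ≠ s)
    (hjp : j p = false) (hjq : j q = false) (hjr : j r = true) (hjs : j s = true) :
    cr p (cr q (an r (an s (occState cr vac j)))) =
      ((-1 : ℂ) ^
          ((((Finset.Ioo p q).filter (fun i => flipBits j r s i = true)).card) +
            (((Finset.Ioo s r).filter (fun i => j i = true)).card))) •
        occState cr vac (flipBits (flipBits j r s) p q) := by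
  have hpq' : p ≠ q := ne_of_lt hpq
  have hsr' : s ≠ r := ne_of_lt hsr
  have hrs : r ≠ s := hsr'.symm
  -- pointwise values
  have hgp : flipBits j r s p = false := by simp [flipBits, hpr, hps, hjp]
  have hgq : flipBits j r s q = false := by simp [flipBits, hqr, hqs, hjq]
  have hj1r : off j s r = true := by simp [hjr, hrs]
  have hg4p : flipBits (flipBits j r s) p q p = true := by simp [flipBits, hpr, hps, hjp, hpq']
  have hg3q : off (flipBits (flipBits j r s) p q) p q = true := by
    simp [flipBits, hqr, hqs, hjq, hpq'.symm]
  -- the key function identity : final state with p, q removed is j with r, s removed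
  have hfun : off (off (flipBits (flipBits j r s) p q) p) q = off (off j s) r := by
    funext i
    by_cases h1 : i = p <;> by_cases h2 : i = q <;> by_cases h3 : i = r <;>
      by_cases h4 : i = s <;> simp_all [off, flipBits]
  -- step 1 : annihilate s
  have e1 : an s (occState cr vac j) =
      ((-1 : ℂ) ^ (((Lf j).filter (fun a => a < s)).length)) • F cr vac (Lf (off j s)) := by
    rw [occState_eq, an_mem cr an vac hmix hvac s (Lf j) (Lf_sorted j) (mem_Lf.mpr hjs),
      Lf_erase]
  -- step 2 : annihilate r
  have e2 : an r (F cr vac (Lf (off j s))) =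
      ((-1 : ℂ) ^ (((Lf (off j s)).filter (fun a => a < r)).length)) •
        F cr vac (Lf (off (off j s) r)) := by
    rw [an_mem cr an vac hmix hvac r (Lf (off j s)) (Lf_sorted _) (mem_Lf.mpr hj1r), Lf_erase]
  -- step 3 : create q
  have e3 : cr q (F cr vac (Lf (off (off j s) r))) =
      ((-1 : ℂ) ^ (((Lf (off (flipBits (flipBits j r s) p q) p)).filter
          (fun a => a < q)).length)) •
        F cr vac (Lf (off (flipBits (flipBits j r s) p q) p)) := by
    have h3 := cr_insert cr vac hcr q (Lf (off (flipBits (flipBits j r s) p q) p))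
      (Lf_sorted _) (mem_Lf.mpr hg3q)
    rw [Lf_erase, hfun] at h3
    exact h3
  -- step 4 : create p
  have e4 : cr p (F cr vac (Lf (off (flipBits (flipBits j r s) p q) p))) =
      ((-1 : ℂ) ^ (((Lf (flipBits (flipBits j r s) p q)).filter (fun a => a < p)).length)) •
        F cr vac (Lf (flipBits (flipBits j r s) p q)) := by
    have h4 := cr_insert cr vac hcr p (Lf (flipBits (flipBits j r s) p q))
      (Lf_sorted _) (mem_Lf.mpr hg4p)
    rw [Lf_erase] at h4
    exact h4
  rw [e1]; simp only [map_smul]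
  rw [e2]; simp only [map_smul]
  rw [e3]; simp only [map_smul]
  rw [e4]
  simp only [smul_smul, ← pow_add]
  rw [occState_eq]
  congr 1
  rw [Lf_filter_length, Lf_filter_length, Lf_filter_length, Lf_filter_length]
  -- convert the Ioo filters to univ filters
  have hd : (Finset.filter (fun i => j i = true) (Finset.Ioo s r)).card
      = (Finset.univ.filter (fun i => j i = true ∧ s < i ∧ i < r)).card := by
    congr 1
    ext i
    simp only [Finset.mem_filter, Finset.mem_Ioo, Finset.mem_univ, true_and]
    tauto
  have hd' : (Finset.filter (fun i => flipBits j r s i = true) (Finset.Ioo p q)).card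
      = (Finset.univ.filter (fun i => flipBits j r s i = true ∧ p < i ∧ i < q)).card := by
    congr 1
    ext i
    simp only [Finset.mem_filter, Finset.mem_Ioo, Finset.mem_univ, true_and]
    tauto
  rw [hd, hd']
  -- the four counts
  have hkr : (Finset.univ.filter (fun i => off j s i = true ∧ i < r)).card
      = (Finset.univ.filter (fun i => j i = true ∧ i < s)).card
        + (Finset.univ.filter (fun i => j i = true ∧ s < i ∧ i < r)).card := by
    rw [card_lt_split (off j s) s r hsr (by simp)]
    congr 1
    · exact card_filter_congr fun i => by
        by_cases h : i = s
        · subst h; simp [lt_irrefl]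
        · simp [off, h]
    · exact card_filter_congr fun i => by
        by_cases h : i = s
        · subst h; simp [lt_irrefl]
        · simp [off, h]
  have hkq : (Finset.univ.filter
        (fun i => off (flipBits (flipBits j r s) p q) p i = true ∧ i < q)).card
      = (Finset.univ.filter (fun i => flipBits j r s i = true ∧ i < p)).card
        + (Finset.univ.filter (fun i => flipBits j r s i = true ∧ p < i ∧ i < q)).card := by
    rw [card_lt_split (off (flipBits (flipBits j r s) p q) p) p q hpq (by simp)]
    congr 1
    · exact card_filter_congr fun i => by
        by_cases h1 : i = p
        · subst h1; simp [lt_irrefl]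
        · by_cases h2 : i = q
          · simp [h2, (asymm hpq : ¬ q < p)]
          · simp [off, flipBits, h1, h2]
    · exact card_filter_congr fun i => by
        by_cases h1 : i = p
        · subst h1; simp [lt_irrefl]
        · by_cases h2 : i = q
          · simp [h2, lt_irrefl]
          · simp [off, flipBits, h1, h2]
  have hkp : (Finset.univ.filter
        (fun i => flipBits (flipBits j r s) p q i = true ∧ i < p)).card
      = (Finset.univ.filter (fun i => flipBits j r s i = true ∧ i < p)).card := by
    exact card_filter_congr fun i => by
      by_cases h1 : i = p
      · subst h1; simp [lt_irrefl]
      · by_cases h2 : i = q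
        · simp [h2, (asymm hpq : ¬ q < p)]
        · simp [flipBits, h1, h2]
  rw [hkr, hkq, hkp]
  set A := (Finset.univ.filter (fun i => j i = true ∧ i < s)).card with hA
  set D := (Finset.univ.filter (fun i => j i = true ∧ s < i ∧ i < r)).card with hD
  set B := (Finset.univ.filter (fun i => flipBits j r s i = true ∧ i < p)).card with hB
  set D' := (Finset.univ.filter (fun i => flipBits j r s i = true ∧ p < i ∧ i < q)).card with hD'
  have hexp : A + ((A + D) + ((B + D') + B)) = (D' + D) + (A + B) * 2 := by ring
  rw [hexp, pow_add, pow_mul]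
  norm_num
  exact neg_one_pow_eq_or ℂ _

end
end

section
/- Let U(t) = [[t, √(1−t²)], [√(1−t²), −t]] for t ∈ [−1,1] and for phases Φ = (φ₀,…,φ_d) define U_Φ(t) = (−i)^d e^{iφ₀Z} Π_{j=1}^d [U(t) e^{iφ_j Z}]. If U_Φ(t) = [[p(t), −q(t)√(1−t²)], [q*(t)√(1−t²), p*(t)]] for polynomials p, q, then: deg(p) ≤ d, deg(q) ≤ d−1, p has parity d mod 2, q has parity (d−1) mod 2, and |p(t)|² + (1−t²)|q(t)|² = 1 for all t ∈ [−1,1]. -/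
set_option maxRecDepth 8000
noncomputable section

/-- The signal unitary `U(t) = [[t, √(1−t²)], [√(1−t²), −t]]`. -/
def signalU (t : ℝ) : Matrix (Fin 2) (Fin 2) ℂ :=
  !![(t : ℂ), ((Real.sqrt (1 - t ^ 2) : ℝ) : ℂ);
     ((Real.sqrt (1 - t ^ 2) : ℝ) : ℂ), (-(t : ℂ))]

/-- The phase rotation `e^{iφZ} = diag(e^{iφ}, e^{−iφ})`. -/
def phaseZ (φ : ℝ) : Matrix (Fin 2) (Fin 2) ℂ :=
  !![Complex.exp (Complex.I * φ), 0; 0, Complex.exp (-(Complex.I * φ))]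

/-- The QSP unitary `U_Φ(t) = (−i)^d e^{iφ₀Z} Π_{j=1}^d [U(t) e^{iφ_j Z}]`. -/
def qspU (d : ℕ) (Φ : Fin (d + 1) → ℝ) (t : ℝ) : Matrix (Fin 2) (Fin 2) ℂ :=
  ((-Complex.I) ^ d) •
    (phaseZ (Φ 0) * ((List.finRange d).map fun j => signalU t * phaseZ (Φ j.succ)).prod)

lemma eval_map_conj (p : Polynomial ℂ) (t : ℝ) :
    (p.map (starRingEnd ℂ)).eval (t : ℂ) = starRingEnd ℂ (p.eval (t : ℂ)) := by
  conv_lhs => rw [Polynomial.eval_map,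
    show ((t : ℝ) : ℂ) = starRingEnd ℂ ((t : ℝ) : ℂ) from (by simp), Polynomial.eval₂_hom]

lemma qspU_zero (Φ : Fin 1 → ℝ) (t : ℝ) : qspU 0 Φ t = phaseZ (Φ 0) := by
  simp [qspU]

lemma qspU_succ (d : ℕ) (Φ : Fin (d + 2) → ℝ) (t : ℝ) :
    qspU (d + 1) Φ t =
      ((-Complex.I) • (phaseZ (Φ 0) * signalU t)) * qspU d (Φ ∘ Fin.succ) t := by
  unfold qspU
  rw [List.finRange_succ]
  simp only [List.map_cons, List.map_map, List.prod_cons, Function.comp_def]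
  rw [Matrix.smul_mul, Matrix.mul_smul, smul_smul, pow_succ, mul_comm ((-Complex.I) ^ d)]
  congr 1
  simp [mul_assoc]

lemma conj_exp_I (φ : ℝ) :
    starRingEnd ℂ (Complex.exp (Complex.I * φ)) = Complex.exp (-(Complex.I * φ)) := by
  rw [← Complex.exp_conj]
  congr 1
  simp [Complex.conj_I]

lemma signalU_mem {t : ℝ} (ht : t ∈ Set.Icc (-1 : ℝ) 1) :
    signalU t ∈ unitary (Matrix (Fin 2) (Fin 2) ℂ) := by
  have hs : Real.sqrt (1 - t ^ 2) * Real.sqrt (1 - t ^ 2) = 1 - t ^ 2 :=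
    Real.mul_self_sqrt (by nlinarith [ht.1, ht.2])
  have hstar : star (signalU t) = signalU t := by
    ext i j
    fin_cases i <;> fin_cases j <;>
      simp [signalU, Matrix.star_apply]
  have h : signalU t * signalU t = 1 := by
    ext i j
    fin_cases i <;> fin_cases j <;>
      · simp [signalU, Matrix.mul_apply, Fin.sum_univ_two, Matrix.one_apply]
        norm_cast
        nlinarith [hs]
  exact ⟨by rw [hstar, h], by rw [hstar, h]⟩

lemma phaseZ_mem (φ : ℝ) : phaseZ φ ∈ unitary (Matrix (Fin 2) (Fin 2) ℂ) := by
  have h1 : Complex.exp (Complex.I * φ) * Complex.exp (-(Complex.I * φ)) = 1 := by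
    rw [← Complex.exp_add]; simp
  have h2 : Complex.exp (-(Complex.I * φ)) * Complex.exp (Complex.I * φ) = 1 := by
    rw [← Complex.exp_add]; simp
  have h3 : starRingEnd ℂ (Complex.exp (-(Complex.I * φ))) = Complex.exp (Complex.I * φ) := by
    rw [← Complex.exp_conj]
    congr 1
    simp [Complex.conj_I]
  constructor <;>
  · ext i j
    fin_cases i <;> fin_cases j <;>
      simp [phaseZ, Matrix.mul_apply, Fin.sum_univ_two, Matrix.one_apply, Matrix.star_apply,
        conj_exp_I, h1, h2, h3]

lemma qspU_mul_star (d : ℕ) (Φ : Fin (d + 1) → ℝ) {t : ℝ} (ht : t ∈ Set.Icc (-1 : ℝ) 1) :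
    qspU d Φ t * star (qspU d Φ t) = 1 := by
  have hA : (phaseZ (Φ 0) *
      ((List.finRange d).map fun j => signalU t * phaseZ (Φ j.succ)).prod) ∈
      unitary (Matrix (Fin 2) (Fin 2) ℂ) := by
    refine mul_mem (phaseZ_mem _) (Submonoid.list_prod_mem _ ?_)
    intro x hx
    simp only [List.mem_map] at hx
    obtain ⟨j, -, rfl⟩ := hx
    exact mul_mem (signalU_mem ht) (phaseZ_mem _)
  unfold qspU
  rw [star_smul, Matrix.smul_mul, Matrix.mul_smul, smul_smul, (Unitary.mem_iff.mp hA).2]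
  have : (-Complex.I) ^ d * star ((-Complex.I) ^ d) = 1 := by
    rw [star_pow, ← mul_pow]
    simp [Complex.conj_I]
  rw [this, one_smul]

lemma step_matrix (φ : ℝ) (P Q : Polynomial ℂ) {t : ℝ} (ht : t ∈ Set.Icc (-1 : ℝ) 1) :
    ((-Complex.I) • (phaseZ φ * signalU t)) *
      !![P.eval (t : ℂ), -(Q.eval (t : ℂ)) * ((Real.sqrt (1 - t ^ 2) : ℝ) : ℂ);
         ((Q.map (starRingEnd ℂ)).eval (t : ℂ)) * ((Real.sqrt (1 - t ^ 2) : ℝ) : ℂ),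
         (P.map (starRingEnd ℂ)).eval (t : ℂ)] =
    !![(Polynomial.C (-Complex.I * Complex.exp (Complex.I * φ)) *
          (P * Polynomial.X ^ 1 +
            (Q.map (starRingEnd ℂ) - Q.map (starRingEnd ℂ) * Polynomial.X ^ 2))).eval (t : ℂ),
       -((Polynomial.C (Complex.I * Complex.exp (Complex.I * φ)) *
          (P.map (starRingEnd ℂ) - Q * Polynomial.X ^ 1)).eval (t : ℂ)) *
          ((Real.sqrt (1 - t ^ 2) : ℝ) : ℂ);
       (((Polynomial.C (Complex.I * Complex.exp (Complex.I * φ)) *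
          (P.map (starRingEnd ℂ) - Q * Polynomial.X ^ 1)).map (starRingEnd ℂ)).eval (t : ℂ)) *
          ((Real.sqrt (1 - t ^ 2) : ℝ) : ℂ),
       ((Polynomial.C (-Complex.I * Complex.exp (Complex.I * φ)) *
          (P * Polynomial.X ^ 1 +
            (Q.map (starRingEnd ℂ) - Q.map (starRingEnd ℂ) * Polynomial.X ^ 2))).map
            (starRingEnd ℂ)).eval (t : ℂ)] := by
  have hs : (((Real.sqrt (1 - t ^ 2) : ℝ) : ℂ)) ^ 2 = 1 - (t : ℂ) ^ 2 := by
    rw [← Complex.ofReal_pow, Real.sq_sqrt (by nlinarith [ht.1, ht.2] : (0:ℝ) ≤ 1 - t ^ 2)]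
    push_cast
    ring
  ext i j
  fin_cases i <;> fin_cases j
  case _ =>
    simp only [phaseZ, signalU, Matrix.mul_apply, Fin.sum_univ_two, Matrix.smul_apply,
      Fin.mk_zero, Fin.mk_one, Fin.isValue, Matrix.cons_val', Matrix.cons_val_zero,
      Matrix.cons_val_one, Matrix.head_cons, Matrix.head_fin_const, Matrix.empty_val',
      Matrix.cons_val_fin_one, Matrix.of_apply, smul_eq_mul]
    simp only [eval_map_conj, Polynomial.eval_mul, Polynomial.eval_add, Polynomial.eval_sub,
      Polynomial.eval_pow, Polynomial.eval_C, Polynomial.eval_X, Polynomial.eval_neg,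
      map_mul, map_add, map_sub, map_pow, map_neg, Complex.conj_conj, Complex.conj_I,
      Complex.conj_ofReal, conj_exp_I]
    linear_combination (-Complex.I * Complex.exp (Complex.I * φ) *
      (starRingEnd ℂ) (Q.eval (t : ℂ))) * hs
  case _ =>
    simp only [phaseZ, signalU, Matrix.mul_apply, Fin.sum_univ_two, Matrix.smul_apply,
      Fin.mk_zero, Fin.mk_one, Fin.isValue, Matrix.cons_val', Matrix.cons_val_zero,
      Matrix.cons_val_one, Matrix.head_cons, Matrix.head_fin_const, Matrix.empty_val',
      Matrix.cons_val_fin_one, Matrix.of_apply, smul_eq_mul]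
    simp only [eval_map_conj, Polynomial.eval_mul, Polynomial.eval_add, Polynomial.eval_sub,
      Polynomial.eval_pow, Polynomial.eval_C, Polynomial.eval_X, Polynomial.eval_neg,
      map_mul, map_add, map_sub, map_pow, map_neg, Complex.conj_conj, Complex.conj_I,
      Complex.conj_ofReal, conj_exp_I]
    ring
  case _ =>
    simp only [phaseZ, signalU, Matrix.mul_apply, Fin.sum_univ_two, Matrix.smul_apply,
      Fin.mk_zero, Fin.mk_one, Fin.isValue, Matrix.cons_val', Matrix.cons_val_zero,
      Matrix.cons_val_one, Matrix.head_cons, Matrix.head_fin_const, Matrix.empty_val',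
      Matrix.cons_val_fin_one, Matrix.of_apply, smul_eq_mul]
    simp only [eval_map_conj, Polynomial.eval_mul, Polynomial.eval_add, Polynomial.eval_sub,
      Polynomial.eval_pow, Polynomial.eval_C, Polynomial.eval_X, Polynomial.eval_neg,
      map_mul, map_add, map_sub, map_pow, map_neg, Complex.conj_conj, Complex.conj_I,
      Complex.conj_ofReal, conj_exp_I]
    ring
  case _ =>
    simp only [phaseZ, signalU, Matrix.mul_apply, Fin.sum_univ_two, Matrix.smul_apply,
      Fin.mk_zero, Fin.mk_one, Fin.isValue, Matrix.cons_val', Matrix.cons_val_zero,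
      Matrix.cons_val_one, Matrix.head_cons, Matrix.head_fin_const, Matrix.empty_val',
      Matrix.cons_val_fin_one, Matrix.of_apply, smul_eq_mul]
    simp only [eval_map_conj, Polynomial.eval_mul, Polynomial.eval_add, Polynomial.eval_sub,
      Polynomial.eval_pow, Polynomial.eval_C, Polynomial.eval_X, Polynomial.eval_neg,
      map_mul, map_add, map_sub, map_pow, map_neg, Complex.conj_conj, Complex.conj_I,
      Complex.conj_ofReal, conj_exp_I]
    linear_combination (Complex.I * Complex.exp (-(Complex.I * φ)) * Q.eval (t : ℂ)) * hs

lemma qsp_poly (d : ℕ) : ∀ Φ : Fin (d + 1) → ℝ, ∃ P Q : Polynomial ℂ,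
    (∀ k, P.coeff k ≠ 0 → k ≤ d ∧ k % 2 = d % 2) ∧
    (∀ k, Q.coeff k ≠ 0 → k < d ∧ k % 2 = (d + 1) % 2) ∧
    (∀ t : ℝ, t ∈ Set.Icc (-1 : ℝ) 1 → qspU d Φ t =
      !![P.eval (t : ℂ), -(Q.eval (t : ℂ)) * ((Real.sqrt (1 - t ^ 2) : ℝ) : ℂ);
         ((Q.map (starRingEnd ℂ)).eval (t : ℂ)) * ((Real.sqrt (1 - t ^ 2) : ℝ) : ℂ),
         (P.map (starRingEnd ℂ)).eval (t : ℂ)]) := by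
  induction d with
  | zero =>
    intro Φ
    refine ⟨Polynomial.C (Complex.exp (Complex.I * Φ 0)), 0, ?_, ?_, ?_⟩
    · intro k hk
      have hk0 : k = 0 := by
        by_contra h
        exact hk (Polynomial.coeff_C.trans (if_neg h))
      simp [hk0]
    · simp
    · intro t ht
      rw [qspU_zero]
      ext i j
      fin_cases i <;> fin_cases j <;>
        simp [phaseZ, Polynomial.map_C, conj_exp_I]
  | succ d ih =>
    intro Φ
    obtain ⟨P, Q, hP, hQ, hM⟩ := ih (Φ ∘ Fin.succ)
    have hQc : ∀ m, (Q.map (starRingEnd ℂ)).coeff m ≠ 0 → m < d ∧ m % 2 = (d + 1) % 2 := by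
      intro m hm
      apply hQ
      intro h
      rw [Polynomial.coeff_map, h, map_zero] at hm
      exact hm rfl
    have hPc : ∀ m, (P.map (starRingEnd ℂ)).coeff m ≠ 0 → m ≤ d ∧ m % 2 = d % 2 := by
      intro m hm
      apply hP
      intro h
      rw [Polynomial.coeff_map, h, map_zero] at hm
      exact hm rfl
    refine ⟨Polynomial.C (-Complex.I * Complex.exp (Complex.I * Φ 0)) *
        (P * Polynomial.X ^ 1 +
          (Q.map (starRingEnd ℂ) - Q.map (starRingEnd ℂ) * Polynomial.X ^ 2)),
      Polynomial.C (Complex.I * Complex.exp (Complex.I * Φ 0)) *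
        (P.map (starRingEnd ℂ) - Q * Polynomial.X ^ 1), ?_, ?_, ?_⟩
    · intro k hk
      rw [Polynomial.coeff_C_mul] at hk
      have hk' : (P * Polynomial.X ^ 1 + (Q.map (starRingEnd ℂ) -
          Q.map (starRingEnd ℂ) * Polynomial.X ^ 2)).coeff k ≠ 0 := by
        intro h
        rw [h, mul_zero] at hk
        exact hk rfl
      rw [Polynomial.coeff_add, Polynomial.coeff_sub, Polynomial.coeff_mul_X_pow',
        Polynomial.coeff_mul_X_pow'] at hk'
      have key : (if 1 ≤ k then P.coeff (k - 1) else 0) ≠ 0 ∨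
          (Q.map (starRingEnd ℂ)).coeff k ≠ 0 ∨
          (if 2 ≤ k then (Q.map (starRingEnd ℂ)).coeff (k - 2) else 0) ≠ 0 := by
        by_contra h
        push_neg at h
        obtain ⟨e1, e2, e3⟩ := h
        apply hk'
        rw [e1, e2, e3]
        ring
      rcases key with h | h | h
      · split_ifs at h with h1
        · obtain ⟨u, v⟩ := hP _ h
          omega
        · exact absurd rfl h
      · obtain ⟨u, v⟩ := hQc _ h
        omega
      · split_ifs at h with h1
        · obtain ⟨u, v⟩ := hQc _ h
          omega
        · exact absurd rfl h
    · intro k hk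
      rw [Polynomial.coeff_C_mul] at hk
      have hk' : ((P.map (starRingEnd ℂ)) - Q * Polynomial.X ^ 1).coeff k ≠ 0 := by
        intro h
        rw [h, mul_zero] at hk
        exact hk rfl
      rw [Polynomial.coeff_sub, Polynomial.coeff_mul_X_pow'] at hk'
      have key : (P.map (starRingEnd ℂ)).coeff k ≠ 0 ∨
          (if 1 ≤ k then Q.coeff (k - 1) else 0) ≠ 0 := by
        by_contra h
        push_neg at h
        obtain ⟨e1, e2⟩ := h
        apply hk'
        rw [e1, e2]
        ring
      rcases key with h | h
      · obtain ⟨u, v⟩ := hPc _ h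
        omega
      · split_ifs at h with h1
        · obtain ⟨u, v⟩ := hQ _ h
          omega
        · exact absurd rfl h
    · intro t ht
      rw [qspU_succ, hM t ht, step_matrix (Φ 0) P Q ht]

/-- Necessity direction of the quantum signal processing theorem: if
`U_Φ(t) = [[p(t), −q(t)√(1−t²)], [q*(t)√(1−t²), p*(t)]]` on `[−1,1]` for polynomials
`p, q`, then `deg p ≤ d`, `deg q ≤ d−1`, `p` has parity `d mod 2`, `q` has parity
`(d−1) mod 2`, and `|p(t)|² + (1−t²)|q(t)|² = 1` for all `t ∈ [−1,1]`. -/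
theorem qsp_necessity (d : ℕ) (Φ : Fin (d + 1) → ℝ) (p q : Polynomial ℂ)
    (hU : ∀ t : ℝ, t ∈ Set.Icc (-1 : ℝ) 1 →
      qspU d Φ t =
        !![p.eval (t : ℂ),
           -(q.eval (t : ℂ)) * ((Real.sqrt (1 - t ^ 2) : ℝ) : ℂ);
           ((q.map (starRingEnd ℂ)).eval (t : ℂ)) * ((Real.sqrt (1 - t ^ 2) : ℝ) : ℂ),
           (p.map (starRingEnd ℂ)).eval (t : ℂ)]) :
    p.natDegree ≤ d ∧
    q.degree < (d : WithBot ℕ) ∧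
    (∀ k : ℕ, p.coeff k ≠ 0 → k % 2 = d % 2) ∧
    (∀ k : ℕ, q.coeff k ≠ 0 → k % 2 = (d + 1) % 2) ∧
    (∀ t : ℝ, t ∈ Set.Icc (-1 : ℝ) 1 →
      ‖p.eval (t : ℂ)‖ ^ 2 +
        (1 - t ^ 2) * ‖q.eval (t : ℂ)‖ ^ 2 = 1) := by
  obtain ⟨P, Q, hP, hQ, hM⟩ := qsp_poly d Φ
  have hpP : p = P := by
    apply Polynomial.eq_of_infinite_eval_eq
    refine Set.Infinite.mono ?_
      (((Set.Icc_infinite (by norm_num : (-1 : ℝ) < 1))).image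
        (Set.injOn_of_injective Complex.ofReal_injective))
    rintro x ⟨t, ht, rfl⟩
    have h := (hU t ht).symm.trans (hM t ht)
    have h00 := congrFun (congrFun h 0) 0
    simpa using h00
  have hqQ : q = Q := by
    apply Polynomial.eq_of_infinite_eval_eq
    refine Set.Infinite.mono ?_
      (((Set.Ioo_infinite (by norm_num : (-1 : ℝ) < 1))).image
        (Set.injOn_of_injective Complex.ofReal_injective))
    rintro x ⟨t, ht, rfl⟩
    have ht' : t ∈ Set.Icc (-1 : ℝ) 1 := Set.Ioo_subset_Icc_self ht
    have h := (hU t ht').symm.trans (hM t ht')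
    have h01 := congrFun (congrFun h 0) 1
    simp only [Matrix.cons_val', Matrix.cons_val_zero, Matrix.cons_val_one, Matrix.head_cons,
      Matrix.empty_val', Matrix.cons_val_fin_one, Matrix.of_apply, Matrix.head_fin_const] at h01
    have hs0 : (((Real.sqrt (1 - t ^ 2) : ℝ) : ℂ)) ≠ 0 := by
      rw [Ne, Complex.ofReal_eq_zero]
      exact ne_of_gt (Real.sqrt_pos.mpr (by nlinarith [ht.1, ht.2]))
    have := mul_right_cancel₀ hs0 h01
    exact neg_injective this
  subst hpP
  subst hqQ
  refine ⟨?_, ?_, fun k hk => (hP k hk).2, fun k hk => (hQ k hk).2, ?_⟩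
  · refine Polynomial.natDegree_le_iff_coeff_eq_zero.mpr fun N hN => ?_
    by_contra h
    have := (hP N h).1
    omega
  · refine (Polynomial.degree_lt_iff_coeff_zero _ d).mpr fun m hm => ?_
    by_contra h
    have h1 := (hQ m h).1
    have h2 : d ≤ m := by exact_mod_cast hm
    omega
  · intro t ht
    have hs2 : Real.sqrt (1 - t ^ 2) ^ 2 = 1 - t ^ 2 :=
      Real.sq_sqrt (by nlinarith [ht.1, ht.2])
    have hu := qspU_mul_star d Φ ht
    rw [hU t ht] at hu
    have h00 := congrFun (congrFun hu 0) 0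
    simp only [Matrix.mul_apply, Fin.sum_univ_two, Matrix.star_apply, Matrix.one_apply,
      Matrix.cons_val', Matrix.cons_val_zero, Matrix.cons_val_one, Matrix.head_cons,
      Matrix.empty_val', Matrix.cons_val_fin_one, Matrix.of_apply, Matrix.head_fin_const,
      if_pos rfl] at h00
    simp only [if_true] at h00
    have hc : (Complex.normSq (p.eval (t : ℂ)) : ℂ) +
        Complex.normSq (-(q.eval (t : ℂ)) * ((Real.sqrt (1 - t ^ 2) : ℝ) : ℂ)) = 1 := by
      rw [← Complex.mul_conj, ← Complex.mul_conj]
      simpa [Complex.star_def] using h00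
    have hr : Complex.normSq (p.eval (t : ℂ)) +
        Complex.normSq (-(q.eval (t : ℂ)) * ((Real.sqrt (1 - t ^ 2) : ℝ) : ℂ)) = 1 := by
      exact_mod_cast hc
    rw [Complex.normSq_mul, Complex.normSq_neg, Complex.normSq_ofReal] at hr
    rw [show Real.sqrt (1 - t ^ 2) * Real.sqrt (1 - t ^ 2) = 1 - t ^ 2 from by
      nlinarith [hs2]] at hr
    rw [Complex.sq_norm, Complex.sq_norm]
    linarith [hr]
end
end
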